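/- For every even integer n ≥ 4 there exists ε > 0 such that every closed equilateral n-gon v : ZMod n → ℝ³ whose diameter is at least n/2 − ε has total curvature strictly less than 4π, i.e., Σᵢ ∠(v(i+1) − v(i), v(i+2) − v(i+1)) < 4π. (By the Fary–Milnor theorem, any such polygon is therefore unknotted.) -/

import Mathlib

open Real

private lemma arccos_le_arccos' {x y : ℝ} (h : x ≤ y) : Real.arccos y ≤ Real.arccos x := by
  unfold Real.arccos; linarith [Real.monotone_arcsin h]

/-- chord of a k-step arc has length at most k. -/
private lemma chord_le {n : ℕ} [NeZero n] (v : ZMod n → EuclideanSpace ℝ (Fin 3))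
    (h : ∀ i : ZMod n, dist (v (i + 1)) (v i) = 1) (p : ZMod n) (k : ℕ) :
    dist (v p) (v (p + (k : ZMod n))) ≤ (k : ℝ) := by
  induction k with
  | zero => simp
  | succ k ih =>
    have h1 : ((k + 1 : ℕ) : ZMod n) = (k : ZMod n) + 1 := by push_cast; ring
    rw [h1, ← add_assoc]
    have h2 := h (p + (k : ZMod n))
    rw [dist_comm] at h2
    calc dist (v p) (v (p + (k : ZMod n) + 1))
        ≤ dist (v p) (v (p + (k : ZMod n)))
          + dist (v (p + (k : ZMod n))) (v (p + (k : ZMod n) + 1)) := dist_triangle _ _ _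
      _ ≤ (k : ℝ) + 1 := by rw [h2]; linarith
      _ = ((k + 1 : ℕ) : ℝ) := by push_cast; ring

/-- key gap estimate: interior two-step chords are nearly 2. -/
private lemma gap_ge {n : ℕ} [NeZero n] (v : ZMod n → EuclideanSpace ℝ (Fin 3))
    (h : ∀ i : ZMod n, dist (v (i + 1)) (v i) = 1) {r : ℕ} (hr : n = r + r)
    (p : ZMod n) (ε : ℝ) (hD : (n : ℝ) / 2 - ε ≤ dist (v p) (v (p + (r : ZMod n))))
    (b : ℕ) (hb1 : 1 ≤ b) (hb2 : b + 1 ≤ r) :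
    2 - ε ≤ dist (v (p + ((b - 1 : ℕ) : ZMod n))) (v (p + ((b + 1 : ℕ) : ZMod n))) := by
  have key : dist (v (p + ((b + 1 : ℕ) : ZMod n))) (v (p + (r : ZMod n)))
      ≤ ((r - (b + 1) : ℕ) : ℝ) := by
    have he : (p + ((b + 1 : ℕ) : ZMod n)) + ((r - (b + 1) : ℕ) : ZMod n) = p + (r : ZMod n) := by
      rw [add_assoc, ← Nat.cast_add]
      congr 2
      omega
    rw [← he]
    exact chord_le v h _ _
  have h2 : dist (v p) (v (p + ((b - 1 : ℕ) : ZMod n))) ≤ ((b - 1 : ℕ) : ℝ) := chord_le v h _ _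
  have htri1 : dist (v p) (v (p + (r : ZMod n)))
      ≤ dist (v p) (v (p + ((b + 1 : ℕ) : ZMod n)))
        + dist (v (p + ((b + 1 : ℕ) : ZMod n))) (v (p + (r : ZMod n))) := dist_triangle _ _ _
  have htri2 : dist (v p) (v (p + ((b + 1 : ℕ) : ZMod n)))
      ≤ dist (v p) (v (p + ((b - 1 : ℕ) : ZMod n)))
        + dist (v (p + ((b - 1 : ℕ) : ZMod n))) (v (p + ((b + 1 : ℕ) : ZMod n))) :=
    dist_triangle _ _ _
  have hc1 : ((r - (b + 1) : ℕ) : ℝ) = (r : ℝ) - (b : ℝ) - 1 := by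
    have : (r - (b + 1) : ℕ) + (b + 1) = r := by omega
    have := congrArg (fun m : ℕ => (m : ℝ)) this
    push_cast at this
    linarith
  have hc2 : ((b - 1 : ℕ) : ℝ) = (b : ℝ) - 1 := by
    have : (b - 1 : ℕ) + 1 = b := by omega
    have := congrArg (fun m : ℕ => (m : ℝ)) this
    push_cast at this
    linarith
  have hn2 : (n : ℝ) / 2 = (r : ℝ) := by
    rw [hr]; push_cast; ring
  rw [hc1] at key
  rw [hc2] at h2
  rw [hn2] at hD
  linarith

/-- angle bound from a lower bound on the chord. -/
private lemma angle_le_of_chord {x y : EuclideanSpace ℝ (Fin 3)}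
    (hx : ‖x‖ = 1) (hy : ‖y‖ = 1) {c : ℝ} (hc : 2 * c + 2 ≤ ‖x + y‖ ^ 2) :
    InnerProductGeometry.angle x y ≤ Real.arccos c := by
  have hip := norm_add_sq_real x y
  rw [hx, hy] at hip
  have hinner : c ≤ inner ℝ x y := by nlinarith
  have : InnerProductGeometry.angle x y = Real.arccos (inner ℝ x y / (‖x‖ * ‖y‖)) := rfl
  rw [this, hx, hy]
  simp only [mul_one, div_one]
  exact arccos_le_arccos' hinner

theorem totalCurvature_lt_four_pi_of_diameter_large (n : ℕ) [NeZero n]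
    (hn : 4 ≤ n) (hev : Even n) :
    ∃ ε : ℝ, 0 < ε ∧
      ∀ v : ZMod n → EuclideanSpace ℝ (Fin 3),
        (∀ i : ZMod n, dist (v (i + 1)) (v i) = 1) →
        (∃ i j : ZMod n, (n : ℝ) / 2 - ε ≤ dist (v i) (v j)) →
        ∑ i : ZMod n,
            InnerProductGeometry.angle (v (i + 1) - v i)
              (v (i + 2) - v (i + 1)) < 4 * Real.pi := by
  obtain ⟨r, hr⟩ := hev
  have hr2 : 2 ≤ r := by omega
  have hπ : (0 : ℝ) < π := Real.pi_pos
  have hnR : (0 : ℝ) < n := by positivity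
  have hB0 : 0 < 2 * π / n := by positivity
  have hBπ : 2 * π / n ≤ π := by
    rw [div_le_iff₀ hnR]
    nlinarith [mul_le_mul_of_nonneg_left (show (4:ℝ) ≤ (n:ℝ) by exact_mod_cast hn) (le_of_lt hπ)]
  set B : ℝ := 2 * π / n with hBdef
  set ε : ℝ := (1 - Real.cos B) / 2 with hεdef
  have hcosB_lt : Real.cos B < 1 := by
    have := Real.strictAntiOn_cos (Set.mem_Icc.2 ⟨le_refl 0, le_of_lt hπ⟩)
      (Set.mem_Icc.2 ⟨le_of_lt hB0, hBπ⟩) hB0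
    simpa using this
  have hBπ' : B < π := by
    rw [hBdef, div_lt_iff₀ hnR]
    nlinarith [mul_le_mul_of_nonneg_left (show (4:ℝ) ≤ (n:ℝ) by exact_mod_cast hn) (le_of_lt hπ)]
  have hcosB_gt : -1 < Real.cos B := by
    have := Real.strictAntiOn_cos (Set.mem_Icc.2 ⟨le_of_lt hB0, hBπ⟩)
      (Set.mem_Icc.2 ⟨le_of_lt hπ, le_refl π⟩) hBπ'
    simpa using this
  have hε0 : 0 < ε := by simp only [hεdef]; linarith
  have hε1 : ε < 1 := by simp only [hεdef]; linarith
  refine ⟨ε, hε0, fun v hedge ⟨i, j, hij⟩ => ?_⟩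
  -- norms of edges
  have hnorm : ∀ t : ZMod n, ‖v (t + 1) - v t‖ = 1 := by
    intro t; rw [← dist_eq_norm]; exact hedge t
  -- j = i + r
  set k : ℕ := (j - i).val with hk
  have hjk : j = i + (k : ZMod n) := by
    have : ((j - i).val : ZMod n) = j - i := by
      simp [ZMod.natCast_val, ZMod.cast_id]
    rw [hk, this]; ring
  have hD1 : dist (v i) (v j) ≤ (k : ℝ) := by rw [hjk]; exact chord_le v hedge i k
  have hD2 : dist (v i) (v j) ≤ ((n - k : ℕ) : ℝ) := by
    have he : j + ((n - k : ℕ) : ZMod n) = i := by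
      rw [hjk, add_assoc, ← Nat.cast_add]
      have : (k + (n - k) : ℕ) = n := by
        have := (j - i).val_lt
        omega
      rw [this, ZMod.natCast_self, add_zero]
    have := chord_le v hedge j (n - k)
    rw [he, dist_comm] at this
    exact this
  have hnhalf : (n : ℝ) / 2 = (r : ℝ) := by rw [hr]; push_cast; ring
  rw [hnhalf] at hij
  have hkr : k = r := by
    have hklt := (j - i).val_lt
    have h1 : r < k + 1 := by
      exact_mod_cast (show (r:ℝ) < (k:ℝ) + 1 by linarith)
    have h2 : r < (n - k) + 1 := by
      exact_mod_cast (show (r:ℝ) < ((n - k : ℕ):ℝ) + 1 by linarith)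
    omega
  rw [hkr] at hjk
  -- hjk : j = i + ↑r
  have hDi : (n : ℝ) / 2 - ε ≤ dist (v i) (v (i + (r : ZMod n))) := by
    rw [hnhalf, ← hjk]; exact hij
  have hji : j + ((r : ℕ) : ZMod n) = i := by
    rw [hjk, add_assoc, ← Nat.cast_add, ← hr, ZMod.natCast_self, add_zero]
  have hDj : (n : ℝ) / 2 - ε ≤ dist (v j) (v (j + (r : ZMod n))) := by
    rw [hnhalf, hji, dist_comm]; exact hij
  -- interior vertices have short two-step chords
  have hvertex : ∀ t : ZMod n, t + 1 ≠ i → t + 1 ≠ j → 2 - ε ≤ dist (v t) (v (t + 2)) := by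
    intro t hti htj
    set a : ℕ := ((t + 1) - i).val with ha
    have hta : t + 1 = i + (a : ZMod n) := by
      have h' : ((a : ℕ) : ZMod n) = (t + 1) - i := by
        simp [ha, ZMod.natCast_val, ZMod.cast_id]
      rw [h']; ring
    have ha0 : a ≠ 0 := by
      intro h0
      exact hti (by rw [hta, h0]; simp)
    have halt : a < n := ZMod.val_lt _
    have har : a ≠ r := by
      intro h0
      exact htj (by rw [hta, h0, hjk])
    have hcast1 : ((a - 1 : ℕ) : ZMod n) + 1 = ((a : ℕ) : ZMod n) := by
      have h' : (a - 1) + 1 = a := by omega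
      conv_rhs => rw [← h']
      rw [Nat.cast_add, Nat.cast_one]
    have ht_eq : t = i + ((a - 1 : ℕ) : ZMod n) := by
      have h' : t + 1 = (i + ((a - 1 : ℕ) : ZMod n)) + 1 := by
        rw [add_assoc, hcast1]; exact hta
      exact add_right_cancel h'
    have ht2_eq : t + 2 = i + ((a + 1 : ℕ) : ZMod n) := by
      have hcast2 : ((a + 1 : ℕ) : ZMod n) = ((a : ℕ) : ZMod n) + 1 := by
        push_cast; ring
      rw [hcast2, ← add_assoc, ← hta]; ring
    rcases lt_or_gt_of_ne har with hlt | hgt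
    · have hg := gap_ge v hedge hr i ε hDi a (by omega) (by omega)
      rw [← ht_eq, ← ht2_eq] at hg
      exact hg
    · have hg := gap_ge v hedge hr j ε hDj (a - r) (by omega) (by omega)
      have e1 : j + ((a - r - 1 : ℕ) : ZMod n) = i + ((a - 1 : ℕ) : ZMod n) := by
        rw [hjk, add_assoc, ← Nat.cast_add]
        congr 2
        omega
      have e2 : j + ((a - r + 1 : ℕ) : ZMod n) = i + ((a + 1 : ℕ) : ZMod n) := by
        rw [hjk, add_assoc, ← Nat.cast_add]
        congr 2
        omega
      rw [e1, e2, ← ht_eq, ← ht2_eq] at hg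
      exact hg
  -- angle bound at interior vertices
  have hangle : ∀ t : ZMod n, t + 1 ≠ i → t + 1 ≠ j →
      InnerProductGeometry.angle (v (t + 1) - v t) (v (t + 2) - v (t + 1)) ≤ B := by
    intro t hti htj
    have hgap := hvertex t hti htj
    have hn1 : ‖v (t + 1) - v t‖ = 1 := hnorm t
    have hn2 : ‖v (t + 2) - v (t + 1)‖ = 1 := by
      have e : t + 1 + 1 = t + 2 := by ring
      have := hnorm (t + 1)
      rw [e] at this
      exact this
    have hsum : (v (t + 1) - v t) + (v (t + 2) - v (t + 1)) = v (t + 2) - v t := by abel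
    have hd : ‖(v (t + 1) - v t) + (v (t + 2) - v (t + 1))‖ = dist (v t) (v (t + 2)) := by
      rw [hsum, ← dist_eq_norm, dist_comm]
    have hchord : 2 * Real.cos B + 2 ≤ ‖(v (t + 1) - v t) + (v (t + 2) - v (t + 1))‖ ^ 2 := by
      rw [hd]
      have h2ε : (0 : ℝ) ≤ 2 - ε := by linarith
      have hsq : (2 - ε) ^ 2 ≤ dist (v t) (v (t + 2)) ^ 2 := by
        apply pow_le_pow_left₀ h2ε hgap
      have hcosε : Real.cos B = 1 - 2 * ε := by rw [hεdef]; ring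
      nlinarith
    have := angle_le_of_chord hn1 hn2 hchord
    rwa [Real.arccos_cos (le_of_lt hB0) hBπ] at this
  -- sum over all vertices
  classical
  set s : Finset (ZMod n) := {i - 1, j - 1} with hs
  have hij_ne : i - 1 ≠ j - 1 := by
    intro h'
    have : i = j := by
      have := congrArg (· + 1) h'
      simpa [sub_add_cancel] using this
    rw [hjk] at this
    have hr0 : ((r : ℕ) : ZMod n) = 0 := by
      have := this.symm
      nth_rewrite 2 [← add_zero i] at this
      exact add_left_cancel this
    rw [ZMod.natCast_eq_zero_iff] at hr0
    have := Nat.le_of_dvd (by omega) hr0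
    omega
  have hcard : s.card = 2 := by
    rw [hs, Finset.card_insert_of_notMem (by simp [hij_ne]), Finset.card_singleton]
  have hle : ∀ t : ZMod n,
      InnerProductGeometry.angle (v (t + 1) - v t) (v (t + 2) - v (t + 1))
        ≤ if t ∈ s then π else B := by
    intro t
    by_cases ht : t ∈ s
    · rw [if_pos ht]
      exact InnerProductGeometry.angle_le_pi _ _
    · rw [if_neg ht]
      rw [hs] at ht
      simp only [Finset.mem_insert, Finset.mem_singleton] at ht
      push_neg at ht
      apply hangle
      · intro h'
        exact ht.1 (by rw [← h']; ring)
      · intro h'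
        exact ht.2 (by rw [← h']; ring)
  have hsum_le : ∑ t : ZMod n,
      InnerProductGeometry.angle (v (t + 1) - v t) (v (t + 2) - v (t + 1))
      ≤ ∑ t : ZMod n, (if t ∈ s then π else B) :=
    Finset.sum_le_sum fun t _ => hle t
  have hsplit : ∑ t : ZMod n, (if t ∈ s then π else B)
      = 2 * π + ((n - 2 : ℕ) : ℝ) * B := by
    rw [← Finset.sum_add_sum_compl s]
    have h1 : ∑ t ∈ s, (if t ∈ s then π else B) = 2 * π := by
      rw [Finset.sum_congr rfl fun t ht => if_pos ht, Finset.sum_const, hcard]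
      simp [two_mul]
    have h2 : ∑ t ∈ sᶜ, (if t ∈ s then π else B) = ((n - 2 : ℕ) : ℝ) * B := by
      rw [Finset.sum_congr rfl fun t ht => if_neg (Finset.mem_compl.mp ht),
        Finset.sum_const, Finset.card_compl, hcard, ZMod.card]
      simp [nsmul_eq_mul]
    rw [h1, h2]
  have hfinal : 2 * π + ((n - 2 : ℕ) : ℝ) * B < 4 * π := by
    have hcast : ((n - 2 : ℕ) : ℝ) = (n : ℝ) - 2 := by
      have : (2 : ℕ) ≤ n := by omega
      push_cast [Nat.cast_sub this]
      ring
    rw [hcast, hBdef, div_eq_mul_inv]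
    have hinv : (0 : ℝ) < (n : ℝ)⁻¹ := by positivity
    have : ((n : ℝ) - 2) * (2 * π * (n : ℝ)⁻¹) < (n : ℝ) * (2 * π * (n : ℝ)⁻¹) := by
      apply mul_lt_mul_of_pos_right _ (by positivity)
      linarith
    have hid : (n : ℝ) * (2 * π * (n : ℝ)⁻¹) = 2 * π := by
      field_simp
    nlinarith
  calc ∑ t : ZMod n,
      InnerProductGeometry.angle (v (t + 1) - v t) (v (t + 2) - v (t + 1))
      ≤ 2 * π + ((n - 2 : ℕ) : ℝ) * B := by rw [← hsplit]; exact hsum_le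
    _ < 4 * π := hfinal
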